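/- Let ρ₀ : [0,1] → ℝ be continuous on [0,1], continuously differentiable on [0,1), positive on [0,1), with ρ₀(1)=0, and suppose there exist δ>0 and L>0 with lim_{s→1⁻} (1-s)^{-δ} ρ₀(s) = L. Define ε₀(s) = (∫_s^1 σ ρ₀(σ) dσ) / ((γ-1) ρ₀(s)) for γ>1. Then ε₀ extends continuously to [0,1] with ε₀(1)=0, ε₀ is positive on [0,1), and ε₀ has a one-sided derivative at 1 equal to -1/((γ-1)(1+δ)). -/

import Mathlib

open Filter Topology intervalIntegral
noncomputable section

set_option maxHeartbeats 1000000 in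
/-- properties of the internal energy profile ε₀ built from ρ₀. -/
theorem stmt0 (γ δ L : ℝ) (hγ : 1 < γ) (hδ : 0 < δ) (hL : 0 < L)
    (ρ₀ : ℝ → ℝ)
    (hρcont : ContinuousOn ρ₀ (Set.Icc 0 1))
    (hρC1 : ContDiffOn ℝ 1 ρ₀ (Set.Ico 0 1))
    (hρpos : ∀ s ∈ Set.Ico (0:ℝ) 1, 0 < ρ₀ s)
    (hρ1 : ρ₀ 1 = 0)
    (hlim : Tendsto (fun s => (1 - s) ^ (-δ) * ρ₀ s) (nhdsWithin 1 (Set.Iio 1)) (nhds L))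
    (ε₀ : ℝ → ℝ)
    (hε : ∀ s, ε₀ s = (∫ σ in s..1, σ * ρ₀ σ) / ((γ - 1) * ρ₀ s)) :
    ε₀ 1 = 0 ∧ ContinuousOn ε₀ (Set.Icc 0 1) ∧
      (∀ s ∈ Set.Ico (0:ℝ) 1, 0 < ε₀ s) ∧
      Tendsto (fun s => (ε₀ s - ε₀ 1) / (s - 1)) (nhdsWithin 1 (Set.Iio 1))
        (nhds (-1 / ((γ - 1) * (1 + δ)))) := by
  have hγ1 : (0:ℝ) < γ - 1 := by linarith
  set F : ℝ → ℝ := fun σ => σ * ρ₀ σ with hF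
  have hFcont : ContinuousOn F (Set.Icc 0 1) := continuousOn_id.mul hρcont
  have hint : ∀ s ∈ Set.Icc (0:ℝ) 1,
      IntervalIntegrable F MeasureTheory.volume s 1 := by
    intro s hs
    apply (hFcont.mono ?_).intervalIntegrable
    rw [Set.uIcc_of_le hs.2]
    exact Set.Icc_subset_Icc hs.1 le_rfl
  have hint0 : ∀ s ∈ Set.Icc (0:ℝ) 1,
      IntervalIntegrable F MeasureTheory.volume 0 s := by
    intro s hs
    apply (hFcont.mono ?_).intervalIntegrable
    rw [Set.uIcc_of_le hs.1]
    exact Set.Icc_subset_Icc le_rfl hs.2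
  set f : ℝ → ℝ := fun s => ∫ σ in s..1, F σ with hf
  have hε1 : ε₀ 1 = 0 := by
    rw [hε 1, hρ1]; simp
  -- continuity of f on Icc 0 1
  have hfcont : ContinuousOn f (Set.Icc 0 1) := by
    have h01 : IntervalIntegrable F MeasureTheory.volume 0 1 :=
      hint 0 ⟨le_rfl, zero_le_one⟩
    have hprim : ContinuousOn (fun s => ∫ σ in (0:ℝ)..s, F σ) (Set.Icc 0 1) := by
      have := intervalIntegral.continuousOn_primitive_interval
        (f := F) (μ := MeasureTheory.volume) (a := 0) (b := 1) ?_
      · rwa [Set.uIcc_of_le zero_le_one] at this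
      · rw [Set.uIcc_of_le zero_le_one]
        exact hFcont.integrableOn_Icc
    have heq : ∀ s ∈ Set.Icc (0:ℝ) 1,
        f s = (∫ σ in (0:ℝ)..1, F σ) - ∫ σ in (0:ℝ)..s, F σ := by
      intro s hs
      rw [intervalIntegral.integral_interval_sub_left h01 (hint0 s hs)]
    exact ContinuousOn.congr (continuousOn_const.sub hprim) heq
  -- positivity
  have hpos : ∀ s ∈ Set.Ico (0:ℝ) 1, 0 < ε₀ s := by
    intro s hs
    rw [hε s]
    apply div_pos
    · apply intervalIntegral.intervalIntegral_pos_of_pos_on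
        (hint s ⟨hs.1, hs.2.le⟩)
      · intro x hx
        exact mul_pos (hs.1.trans_lt hx.1) (hρpos x ⟨(hs.1.trans_lt hx.1).le, hx.2⟩)
      · exact hs.2
    · exact mul_pos hγ1 (hρpos s hs)
  -- the key limit via L'Hôpital
  have hIoo : Set.Ioo (0:ℝ) 1 ∈ 𝓝[<] (1:ℝ) := Ioo_mem_nhdsLT zero_lt_one
  set g : ℝ → ℝ := fun s => (1 - s) ^ (1 + δ) with hg
  set g' : ℝ → ℝ := fun s => -1 * (1 + δ) * (1 - s) ^ (1 + δ - 1) with hg'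
  have hff' : ∀ᶠ x in 𝓝[<] (1:ℝ), HasDerivAt f (-F x) x := by
    filter_upwards [hIoo] with x hx
    apply intervalIntegral.integral_hasDerivAt_left (hint x ⟨hx.1.le, hx.2.le⟩)
    · exact ⟨Set.Ioo 0 1, Ioo_mem_nhds hx.1 hx.2,
        ((hFcont.mono Set.Ioo_subset_Icc_self).aestronglyMeasurable measurableSet_Ioo)⟩
    · exact hFcont.continuousAt (Icc_mem_nhds hx.1 hx.2)
  have hgg' : ∀ᶠ x in 𝓝[<] (1:ℝ), HasDerivAt g (g' x) x := by
    filter_upwards [hIoo] with x hx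
    have h1 : HasDerivAt (fun s : ℝ => 1 - s) (-1) x := (hasDerivAt_id x).const_sub 1
    exact h1.rpow_const (Or.inl (ne_of_gt (by linarith [hx.1, hx.2] : (0:ℝ) < 1 - x)))
  have hgne : ∀ᶠ x in 𝓝[<] (1:ℝ), g' x ≠ 0 := by
    filter_upwards [hIoo] with x hx
    have : (0:ℝ) < (1 - x) ^ (1 + δ - 1) :=
      Real.rpow_pos_of_pos (by linarith [hx.1, hx.2]) _
    have h2 : (0:ℝ) < 1 + δ := by linarith
    simp only [hg']
    intro hcon
    nlinarith
  have hfa : Tendsto f (𝓝[<] (1:ℝ)) (𝓝 0) := by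
    have h1 : Tendsto f (𝓝[Set.Icc (0:ℝ) 1] 1) (𝓝 (f 1)) :=
      hfcont 1 ⟨zero_le_one, le_rfl⟩
    have hf1 : f 1 = 0 := by simp [hf]
    rw [hf1] at h1
    rw [← nhdsWithin_Ico_eq_nhdsLT (zero_lt_one (α := ℝ))]
    exact h1.mono_left (nhdsWithin_mono 1 Set.Ico_subset_Icc_self)
  have hga : Tendsto g (𝓝[<] (1:ℝ)) (𝓝 0) := by
    have h1 : Tendsto (fun s : ℝ => 1 - s) (𝓝[<] (1:ℝ)) (𝓝 0) := by
      have h0 : Tendsto (fun s : ℝ => 1 - s) (𝓝 (1:ℝ)) (𝓝 0) := by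
        have hc : Continuous fun s : ℝ => 1 - s := continuous_const.sub continuous_id
        simpa using hc.tendsto 1
      exact h0.mono_left nhdsWithin_le_nhds
    have h2 : ContinuousAt (fun x : ℝ => x ^ (1 + δ)) 0 :=
      Real.continuousAt_rpow_const 0 (1 + δ) (Or.inr (by linarith))
    have := h2.tendsto.comp h1
    simpa [Function.comp_def, Real.zero_rpow (by positivity : (1:ℝ) + δ ≠ 0)] using this
  have hdiv : Tendsto (fun x => -F x / g' x) (𝓝[<] (1:ℝ)) (𝓝 (L / (1 + δ))) := by
    have hid : Tendsto (fun x : ℝ => x) (𝓝[<] (1:ℝ)) (𝓝 1) :=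
      tendsto_id.mono_left nhdsWithin_le_nhds
    have hT : Tendsto (fun x => x * ((1 - x) ^ (-δ) * ρ₀ x) / (1 + δ))
        (𝓝[<] (1:ℝ)) (𝓝 (1 * L / (1 + δ))) := (hid.mul hlim).div_const (1 + δ)
    rw [one_mul] at hT
    apply hT.congr'
    filter_upwards [hIoo] with x hx
    have h1x : (0:ℝ) < 1 - x := by linarith [hx.1, hx.2]
    have hrne : ((1:ℝ) - x) ^ δ ≠ 0 := ne_of_gt (Real.rpow_pos_of_pos h1x _)
    rw [Real.rpow_neg h1x.le]
    simp only [hg', hF, add_sub_cancel_left]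
    have hδ1 : (1:ℝ) + δ ≠ 0 := by positivity
    have hden : -1 * (1 + δ) * (1 - x) ^ δ ≠ 0 :=
      mul_ne_zero (mul_ne_zero (by norm_num) hδ1) hrne
    rw [div_eq_div_iff hδ1 hden]
    have hinv : ((1 - x) ^ δ)⁻¹ * (1 - x) ^ δ = 1 := inv_mul_cancel₀ hrne
    linear_combination (-(1 + δ) * x * ρ₀ x) * hinv
  have hA : Tendsto (fun x => f x / g x) (𝓝[<] (1:ℝ)) (𝓝 (L / (1 + δ))) :=
    HasDerivAt.lhopital_zero_nhdsLT hff' hgg' hgne hfa hga hdiv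
  have hB : Tendsto (fun s => -1 / ((γ - 1) * ((1 - s) ^ (-δ) * ρ₀ s)))
      (𝓝[<] (1:ℝ)) (𝓝 (-1 / ((γ - 1) * L))) :=
    tendsto_const_nhds.div (tendsto_const_nhds.mul hlim)
      (ne_of_gt (mul_pos hγ1 hL))
  have hC := hA.mul hB
  have hval : L / (1 + δ) * (-1 / ((γ - 1) * L)) = -1 / ((γ - 1) * (1 + δ)) := by
    field_simp
  rw [hval] at hC
  have hderiv : Tendsto (fun s => (ε₀ s - ε₀ 1) / (s - 1)) (𝓝[<] (1:ℝ))
      (𝓝 (-1 / ((γ - 1) * (1 + δ)))) := by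
    apply hC.congr'
    filter_upwards [hIoo] with s hs
    have h1s : (0:ℝ) < 1 - s := by linarith [hs.1, hs.2]
    have hρne : ρ₀ s ≠ 0 := ne_of_gt (hρpos s ⟨hs.1.le, hs.2⟩)
    have hrne : ((1:ℝ) - s) ^ δ ≠ 0 := ne_of_gt (Real.rpow_pos_of_pos h1s _)
    have hgs : g s = (1 - s) * (1 - s) ^ δ := by
      simp only [hg]
      rw [Real.rpow_add h1s, Real.rpow_one]
    rw [hε s, hε1, hgs, Real.rpow_neg h1s.le]
    simp only [mul_zero, zero_div, sub_zero]
    have hs1 : s - 1 ≠ 0 := by intro h; linarith [sub_eq_zero.mp h]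
    have h1s' : (1:ℝ) - s ≠ 0 := ne_of_gt h1s
    have hγne : γ - 1 ≠ 0 := ne_of_gt hγ1
    field_simp [hs1, h1s', hγne, hρne, hrne]
    ring
  refine ⟨hε1, ?_, hpos, hderiv⟩
  -- continuity
  intro x hx
  rcases eq_or_lt_of_le hx.2 with h1 | h1
  · -- x = 1
    subst h1
    rw [← continuousWithinAt_diff_self]
    have htends : Tendsto ε₀ (𝓝[<] (1:ℝ)) (𝓝 (ε₀ 1)) := by
      have hsub : Tendsto (fun s : ℝ => s - 1) (𝓝[<] (1:ℝ)) (𝓝 0) := by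
        have h0 : Tendsto (fun s : ℝ => s - 1) (𝓝 (1:ℝ)) (𝓝 0) := by
          have hc : Continuous fun s : ℝ => s - 1 := continuous_id.sub continuous_const
          simpa using hc.tendsto 1
        exact h0.mono_left nhdsWithin_le_nhds
      have := hderiv.mul hsub
      rw [mul_zero] at this
      have h2 : Tendsto ε₀ (𝓝[<] (1:ℝ)) (𝓝 0) := by
        apply this.congr'
        filter_upwards [self_mem_nhdsWithin] with s hs
        have hs1 : s - 1 ≠ 0 := by
          intro h; rw [sub_eq_zero] at h; exact absurd h (ne_of_lt hs)
        field_simp [hε1]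
        simp [hε1]
      rwa [hε1]
    exact htends.mono_left (nhdsWithin_mono 1 (fun y hy => hy.1.2.lt_of_ne hy.2))
  · -- x < 1
    have hx' : x ∈ Set.Ico (0:ℝ) 1 := ⟨hx.1, h1⟩
    have hnum : ContinuousWithinAt f (Set.Icc 0 1) x := hfcont x hx
    have hden : ContinuousWithinAt (fun s => (γ - 1) * ρ₀ s) (Set.Icc 0 1) x :=
      (continuousOn_const.mul hρcont) x hx
    have := hnum.div hden (ne_of_gt (mul_pos hγ1 (hρpos x hx')))
    exact this.congr (fun y _ => hε y) (hε x)
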